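/- arXiv:2601.06586 — 2 statements merged into one kernel-verified Lean document; each statement's English description precedes it below -/
import Mathlib

section
/- Let Φ and φ denote the standard normal CDF and PDF, and fix 0 < α < 1/2 with z_α the α-quantile of the standard normal (so Φ(z_α) = α). Then for every real number x, Φ(z_α + x) ≥ min(1 − α, α + φ(z_α)·x). -/
open MeasureTheory

/-- Standard normal density. -/
noncomputable def stdGaussianPDF (t : ℝ) : ℝ :=
  Real.exp (-t ^ 2 / 2) / Real.sqrt (2 * Real.pi)

/-- Standard normal cumulative distribution function. -/
noncomputable def stdGaussianCDF (z : ℝ) : ℝ :=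
  ∫ t in Set.Iic z, stdGaussianPDF t

open Set Real

lemma sg_nonneg (t : ℝ) : 0 ≤ stdGaussianPDF t :=
  div_nonneg (Real.exp_nonneg _) (Real.sqrt_nonneg _)

lemma sg_integrable : Integrable stdGaussianPDF := by
  have h := (integrable_exp_neg_mul_sq (by norm_num : (0:ℝ) < 1/2)).div_const
    (Real.sqrt (2 * Real.pi))
  convert h using 2 with t
  unfold stdGaussianPDF
  ring_nf

lemma sg_total : ∫ t : ℝ, stdGaussianPDF t = 1 := by
  have h : ∫ t : ℝ, Real.exp (-(1/2 : ℝ) * t ^ 2) = Real.sqrt (Real.pi / (1/2)) :=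
    integral_gaussian (1/2)
  have hc : (0:ℝ) < Real.sqrt (2 * Real.pi) :=
    Real.sqrt_pos.2 (by positivity)
  unfold stdGaussianPDF
  rw [integral_div]
  have : ∫ t : ℝ, Real.exp (-t ^ 2 / 2) = Real.sqrt (2 * Real.pi) := by
    rw [show (2 * Real.pi) = Real.pi / (1/2) by ring, ← h]
    congr 1 with t; ring_nf
  rw [this, div_self hc.ne']

lemma sg_symm (t : ℝ) : stdGaussianPDF (-t) = stdGaussianPDF t := by
  unfold stdGaussianPDF; ring_nf

lemma sg_le {s t : ℝ} (h : t ^ 2 ≤ s ^ 2) : stdGaussianPDF s ≤ stdGaussianPDF t := by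
  unfold stdGaussianPDF
  have hc : (0:ℝ) < Real.sqrt (2 * Real.pi) := Real.sqrt_pos.2 (by positivity)
  exact (div_le_div_iff_of_pos_right hc).2 (Real.exp_le_exp.2 (by linarith))

lemma cdf_mono : Monotone stdGaussianCDF := by
  intro a b hab
  exact setIntegral_mono_set sg_integrable.integrableOn
    (Filter.Eventually.of_forall sg_nonneg)
    (HasSubset.Subset.eventuallyLE (Iic_subset_Iic.2 hab))

lemma cdf_neg (z : ℝ) : stdGaussianCDF (-z) = 1 - stdGaussianCDF z := by
  have h1 : stdGaussianCDF (-z) = ∫ t in Ioi z, stdGaussianPDF t := by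
    rw [show stdGaussianCDF (-z) = ∫ t in Iic (-z), stdGaussianPDF (-t) by
      unfold stdGaussianCDF; congr 1 with t; rw [sg_symm]]
    rw [integral_comp_neg_Iic, neg_neg]
  have h2 := intervalIntegral.integral_Iic_add_Ioi (b := z) sg_integrable.integrableOn
    sg_integrable.integrableOn
  rw [sg_total] at h2
  unfold stdGaussianCDF at *
  linarith [h1, h2]

lemma cdf_sub {a b : ℝ} (hab : a ≤ b) :
    stdGaussianCDF b - stdGaussianCDF a = ∫ t in Ioc a b, stdGaussianPDF t := by
  unfold stdGaussianCDF
  rw [intervalIntegral.integral_Iic_sub_Iic sg_integrable.integrableOn sg_integrable.integrableOn,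
    intervalIntegral.integral_of_le hab]

lemma cdf_zero : stdGaussianCDF 0 = 1/2 := by
  have := cdf_neg 0
  rw [neg_zero] at this
  linarith

/-- Pointwise lower bound: Φ(z_α + x) ≥ min(1 − α, α + φ(z_α)·x). -/
theorem stdGaussianCDF_add_ge_min
    (α : ℝ) (hα0 : 0 < α) (hα : α < 1 / 2)
    (zα : ℝ) (hz : stdGaussianCDF zα = α) :
    ∀ x : ℝ, min (1 - α) (α + stdGaussianPDF zα * x) ≤ stdGaussianCDF (zα + x) := by
  have hzneg : zα ≤ 0 := by
    by_contra h
    push_neg at h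
    have := cdf_mono h.le
    rw [cdf_zero, hz] at this
    linarith
  intro x
  rcases le_or_gt x 0 with hx | hx
  · -- x ≤ 0 : show α + φ(zα) x ≤ Φ(zα + x)
    refine le_trans (min_le_right _ _) ?_
    have hab : zα + x ≤ zα := by linarith
    have hsub := cdf_sub hab
    rw [hz] at hsub
    -- bound the integral above by φ(zα) * (-x)
    have hbound : ∫ t in Ioc (zα + x) zα, stdGaussianPDF t ≤ stdGaussianPDF zα * (-x) := by
      have h1 : ∫ t in Ioc (zα + x) zα, stdGaussianPDF t ≤
          ∫ _t in Ioc (zα + x) zα, stdGaussianPDF zα := by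
        refine setIntegral_mono_on sg_integrable.integrableOn
          (integrableOn_const measure_Ioc_lt_top.ne) measurableSet_Ioc ?_
        intro t ht
        exact sg_le (by nlinarith [ht.2, hzneg])
      have h2 : ∫ _t in Ioc (zα + x) zα, stdGaussianPDF zα = stdGaussianPDF zα * (-x) := by
        rw [setIntegral_const, measureReal_def, Real.volume_Ioc, smul_eq_mul,
          ENNReal.toReal_ofReal (by linarith)]
        ring
      linarith
    linarith
  · rcases le_or_gt (-2 * zα) x with hx2 | hx2
    · -- large x : Φ(zα + x) ≥ Φ(-zα) = 1 - α
      refine le_trans (min_le_left _ _) ?_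
      have := cdf_mono (show -zα ≤ zα + x by linarith)
      rw [cdf_neg, hz] at this
      exact this
    · -- moderate x : Φ(zα + x) - α ≥ φ(zα) x
      refine le_trans (min_le_right _ _) ?_
      have hab : zα ≤ zα + x := by linarith
      have hsub := cdf_sub hab
      rw [hz] at hsub
      have hbound : stdGaussianPDF zα * x ≤ ∫ t in Ioc zα (zα + x), stdGaussianPDF t := by
        have h1 : ∫ _t in Ioc zα (zα + x), stdGaussianPDF zα ≤
            ∫ t in Ioc zα (zα + x), stdGaussianPDF t := by
          refine setIntegral_mono_on (integrableOn_const measure_Ioc_lt_top.ne)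
            sg_integrable.integrableOn measurableSet_Ioc ?_
          intro t ht
          exact sg_le (by nlinarith [ht.1, ht.2])
        have h2 : ∫ _t in Ioc zα (zα + x), stdGaussianPDF zα = stdGaussianPDF zα * x := by
          rw [setIntegral_const, measureReal_def, Real.volume_Ioc, smul_eq_mul,
            ENNReal.toReal_ofReal (by linarith)]
          ring
        linarith
      linarith
end

section
/- Let F : ℝ → [0,1] be a continuous cumulative distribution function and X a random variable with law given by F. Then the random variable F(X) is uniformly distributed on [0,1], i.e., for all α ∈ [0,1], P(F(X) ≤ α) = α. -/
open MeasureTheory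

/-- Probability integral transform: if F is the continuous CDF of X, then F(X) is
uniformly distributed on [0,1]. -/
theorem probability_integral_transform
    {Ω : Type*} [MeasurableSpace Ω] (μ : Measure Ω) [IsProbabilityMeasure μ]
    (X : Ω → ℝ) (hX : Measurable X)
    (F : ℝ → ℝ) (hFmono : Monotone F) (hFcont : Continuous F)
    (hFbot : Filter.Tendsto F Filter.atBot (nhds 0))
    (hFtop : Filter.Tendsto F Filter.atTop (nhds 1))
    (hFlaw : ∀ t : ℝ, (μ {ω | X ω ≤ t}).toReal = F t) :
    ∀ α : ℝ, 0 ≤ α → α ≤ 1 → (μ {ω | F (X ω) ≤ α}).toReal = α := by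
  have hF1 : ∀ t, F t ≤ 1 := fun t =>
    ge_of_tendsto hFtop (Filter.eventually_atTop.2 ⟨t, fun u hu => hFmono hu⟩)
  intro α hα0 hα1
  rcases eq_or_lt_of_le hα1 with h1 | h1
  · have hs : {ω | F (X ω) ≤ α} = Set.univ := by
      ext ω; simp only [Set.mem_setOf_eq, Set.mem_univ, iff_true]
      rw [h1]; exact hF1 (X ω)
    rw [hs, measure_univ]; simp [h1]
  · by_cases hS : ∃ t, F t ≤ α
    · obtain ⟨T, hT⟩ : ∃ T, α < F T := (hFtop.eventually (eventually_gt_nhds h1)).exists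
      set S := {t | F t ≤ α} with hSdef
      have hbdd : BddAbove S := ⟨T, fun t ht =>
        le_of_not_gt fun hc => absurd (le_trans (hFmono hc.le) ht) (not_le.2 hT)⟩
      have hclosed : IsClosed S := IsClosed.preimage hFcont isClosed_Iic
      set s := sSup S with hsdef
      have hsmem : s ∈ S := hclosed.csSup_mem hS hbdd
      have hFs : F s = α := by
        have hFsle : F s ≤ α := hsmem
        rcases eq_or_lt_of_le hFsle with h | h
        · exact h
        · exfalso
          obtain ⟨b, hb, hFb⟩ :=
            ((hFcont.continuousAt.eventually (eventually_lt_nhds h)).exists_gt)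
          exact absurd (le_csSup hbdd (hFb.le : b ∈ S)) (not_le.2 hb)
      have hset : {ω | F (X ω) ≤ α} = {ω | X ω ≤ s} := by
        ext ω
        simp only [Set.mem_setOf_eq]
        constructor
        · intro h; exact le_csSup hbdd h
        · intro h; exact le_trans (hFmono h) hsmem
      rw [hset, hFlaw s, hFs]
    · push_neg at hS
      have hα : α = 0 := le_antisymm
        (ge_of_tendsto hFbot (Filter.Eventually.of_forall fun t => (hS t).le)) hα0
      have hs : {ω | F (X ω) ≤ α} = ∅ := by
        ext ω; simp only [Set.mem_setOf_eq, Set.mem_empty_iff_false, iff_false, not_le]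
        exact hS (X ω)
      rw [hs, measure_empty, hα]; simp
end
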